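/- arXiv:2603.20353 — 3 statements merged into one kernel-verified Lean document; each statement's English description precedes it below -/
import Mathlib

section
/- Let M, N be natural numbers, let u, v : Fin N → EuclideanSpace ℝ (Fin M), let Δ ∈ EuclideanSpace ℝ (Fin M), and let R be an M×M real orthogonal matrix (RᵀR = 1) such that vᵢ = R • (uᵢ − Δ) for every i. Then for every pair of indices i, j, 2⟪uᵢ − uⱼ, Δ⟫ = ‖uᵢ‖² − ‖uⱼ‖² − ‖vᵢ‖² + ‖vⱼ‖². -/
open scoped RealInnerProductSpace Matrix

lemma mulVec_norm_sq_eq {M : ℕ} (R : Matrix (Fin M) (Fin M) ℝ) (hR : Rᵀ * R = 1)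
    (x : EuclideanSpace ℝ (Fin M)) :
    ‖(WithLp.toLp 2 (R.mulVec x) : EuclideanSpace ℝ (Fin M))‖ ^ 2 = ‖x‖ ^ 2 := by
  have hip : ∀ a b : EuclideanSpace ℝ (Fin M), ⟪a, b⟫ = (a : Fin M → ℝ) ⬝ᵥ (b : Fin M → ℝ) := by
    intro a b
    simp [PiLp.inner_apply, dotProduct, mul_comm]
  rw [← real_inner_self_eq_norm_sq, ← real_inner_self_eq_norm_sq, hip, hip, WithLp.ofLp_toLp,
    Matrix.dotProduct_mulVec, ← Matrix.mulVec_transpose, Matrix.mulVec_mulVec, hR,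
    Matrix.one_mulVec]

/-- The system `BΔ = ½b` of Theorem 1: if `vᵢ = R (uᵢ - Δ)` with `R` orthogonal,
then `2⟪uᵢ - uⱼ, Δ⟫ = ‖uᵢ‖² - ‖uⱼ‖² - ‖vᵢ‖² + ‖vⱼ‖²` for every pair `i, j`. -/
theorem linear_system_of_orthogonal_shift (M N : ℕ)
    (u v : Fin N → EuclideanSpace ℝ (Fin M))
    (Δ : EuclideanSpace ℝ (Fin M)) (R : Matrix (Fin M) (Fin M) ℝ)
    (hR : Rᵀ * R = 1)
    (hv : ∀ i, v i = R.mulVec (u i - Δ)) :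
    ∀ i j, 2 * ⟪u i - u j, Δ⟫ = ‖u i‖ ^ 2 - ‖u j‖ ^ 2 - ‖v i‖ ^ 2 + ‖v j‖ ^ 2 := by
  intro i j
  have hvnorm : ∀ i, ‖v i‖ ^ 2 = ‖u i - Δ‖ ^ 2 := fun i => by
    rw [← WithLp.toLp_ofLp (p := 2) (v i), hv i]; exact mulVec_norm_sq_eq R hR (u i - Δ)
  rw [hvnorm i, hvnorm j, norm_sub_sq_real, norm_sub_sq_real, inner_sub_left]
  ring
end

section
/- Let M, N be natural numbers, let u, v : Fin N → EuclideanSpace ℝ (Fin M), and suppose the family of pairwise difference vectors {uᵢ − uⱼ : i, j ∈ Fin N} spans EuclideanSpace ℝ (Fin M). If Δ and Δ' are two vectors in EuclideanSpace ℝ (Fin M) such that ‖uᵢ − Δ‖ = ‖vᵢ‖ and ‖uᵢ − Δ'‖ = ‖vᵢ‖ for every i, then Δ = Δ'. In particular, under the spanning hypothesis, the shift Δ in Theorem 1 is uniquely determined by the norm data {‖uᵢ‖, ‖vᵢ‖, uᵢ}. -/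
/-- Uniqueness of the shift in Theorem 1: if the pairwise differences `uᵢ - uⱼ`
span the whole space, then a shift `Δ` with `‖uᵢ - Δ‖ = ‖vᵢ‖` for all `i` is
uniquely determined. -/
theorem shift_unique_of_span (M N : ℕ)
    (u v : Fin N → EuclideanSpace ℝ (Fin M))
    (hspan : Submodule.span ℝ
      (Set.range fun p : Fin N × Fin N => u p.1 - u p.2) = ⊤)
    (Δ Δ' : EuclideanSpace ℝ (Fin M))
    (hΔ : ∀ i, ‖u i - Δ‖ = ‖v i‖)
    (hΔ' : ∀ i, ‖u i - Δ'‖ = ‖v i‖) :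
    Δ = Δ' := by
  set d := Δ - Δ' with hd
  have key : ∀ i, 2 * (inner ℝ (u i) d : ℝ) = ‖Δ‖ ^ 2 - ‖Δ'‖ ^ 2 := by
    intro i
    have h1 : ‖u i - Δ‖ ^ 2 = ‖u i - Δ'‖ ^ 2 := by rw [hΔ i, hΔ' i]
    rw [norm_sub_sq_real, norm_sub_sq_real] at h1
    have : (inner ℝ (u i) d : ℝ) = inner ℝ (u i) Δ - inner ℝ (u i) Δ' := by
      rw [hd, inner_sub_right]
    rw [this]
    nlinarith [h1]
  have horth : ∀ x ∈ Set.range fun p : Fin N × Fin N => u p.1 - u p.2,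
      inner ℝ x d = (0 : ℝ) := by
    rintro x ⟨⟨i, j⟩, rfl⟩
    have := key i
    have := key j
    have h : (inner ℝ (u i - u j) d : ℝ) = inner ℝ (u i) d - inner ℝ (u j) d := inner_sub_left _ _ _
    rw [h]
    linarith
  have hmem : d ∈ (Submodule.span ℝ
      (Set.range fun p : Fin N × Fin N => u p.1 - u p.2))ᗮ := by
    rw [Submodule.mem_orthogonal]
    intro y hy
    induction hy using Submodule.span_induction with
    | mem x hx => exact horth x hx
    | zero => simp
    | add x y _ _ hx hy => rw [inner_add_left, hx, hy]; ring
    | smul c x _ hx => rw [inner_smul_left, hx]; ring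
  rw [hspan, Submodule.top_orthogonal_eq_bot, Submodule.mem_bot] at hmem
  have : Δ - Δ' = 0 := hmem
  exact sub_eq_zero.mp this
end

section
/- Let M, N be natural numbers, let u, v : Fin N → EuclideanSpace ℝ (Fin M), let Δ ∈ EuclideanSpace ℝ (Fin M), and let R be an M×M real orthogonal matrix (RᵀR = 1) with vᵢ = R • (uᵢ − Δ) for every i. Suppose moreover that the pairwise difference vectors {uᵢ − uⱼ : i, j ∈ Fin N} span EuclideanSpace ℝ (Fin M). Then Δ is the unique vector x ∈ EuclideanSpace ℝ (Fin M) satisfying the full system of linear equations 2⟪uᵢ − uⱼ, x⟫ = ‖uᵢ‖² − ‖uⱼ‖² − ‖vᵢ‖² + ‖vⱼ‖² for all pairs i, j. -/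
open scoped RealInnerProductSpace Matrix

lemma norm_mulVec_of_orthogonal {M : ℕ} (R : Matrix (Fin M) (Fin M) ℝ)
    (hR : Rᵀ * R = 1) (w : EuclideanSpace ℝ (Fin M)) :
    ‖WithLp.toLp 2 (R.mulVec w)‖ ^ 2 = ‖w‖ ^ 2 := by
  rw [← real_inner_self_eq_norm_sq, ← real_inner_self_eq_norm_sq]
  have : (R.mulVec w) ⬝ᵥ (R.mulVec w) = w ⬝ᵥ w := by
    rw [Matrix.dotProduct_mulVec, ← Matrix.mulVec_transpose,
      Matrix.mulVec_mulVec, hR, Matrix.one_mulVec]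
  simp only [PiLp.inner_apply, RCLike.inner_apply, conj_trivial, PiLp.toLp_apply]
  simpa [dotProduct, mul_comm] using this

/-- Theorem 1 of the paper, stated coordinate-freely: if `vᵢ = R (uᵢ - Δ)`
with `R` orthogonal, and the pairwise differences `uᵢ - uⱼ` span the whole
space, then `Δ` is the unique solution of the linear system
`2⟪uᵢ - uⱼ, x⟫ = ‖uᵢ‖² - ‖uⱼ‖² - ‖vᵢ‖² + ‖vⱼ‖²` over all pairs `i, j`. -/
theorem shift_unique_solution_of_linear_system (M N : ℕ)
    (u v : Fin N → EuclideanSpace ℝ (Fin M))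
    (Δ : EuclideanSpace ℝ (Fin M)) (R : Matrix (Fin M) (Fin M) ℝ)
    (hR : Rᵀ * R = 1)
    (hv : ∀ i, v i = R.mulVec (u i - Δ))
    (hspan : Submodule.span ℝ
      (Set.range fun p : Fin N × Fin N => u p.1 - u p.2) = ⊤) :
    ∀ x : EuclideanSpace ℝ (Fin M),
      (∀ i j, 2 * ⟪u i - u j, x⟫
          = ‖u i‖ ^ 2 - ‖u j‖ ^ 2 - ‖v i‖ ^ 2 + ‖v j‖ ^ 2) ↔ x = Δ := by
  have hnv : ∀ i, ‖v i‖ ^ 2 = ‖u i - Δ‖ ^ 2 := fun i => by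
    rw [show v i = WithLp.toLp 2 (R.mulVec (u i - Δ)) from congrArg (WithLp.toLp 2) (hv i)]; exact norm_mulVec_of_orthogonal R hR _
  have hΔ : ∀ i j : Fin N, 2 * ⟪u i - u j, Δ⟫
      = ‖u i‖ ^ 2 - ‖u j‖ ^ 2 - ‖v i‖ ^ 2 + ‖v j‖ ^ 2 := by
    intro i j
    rw [hnv i, hnv j, ← real_inner_self_eq_norm_sq, ← real_inner_self_eq_norm_sq,
      ← real_inner_self_eq_norm_sq, ← real_inner_self_eq_norm_sq]
    simp only [inner_sub_sub_self, inner_sub_left, inner_sub_right,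
      real_inner_comm (u i) Δ, real_inner_comm (u j) Δ]
    ring
  intro x
  constructor
  · intro hx
    have key : ∀ w : EuclideanSpace ℝ (Fin M), ⟪w, x - Δ⟫ = 0 := by
      intro w
      have hw : w ∈ Submodule.span ℝ
          (Set.range fun p : Fin N × Fin N => u p.1 - u p.2) := by
        rw [hspan]; trivial
      induction hw using Submodule.span_induction with
      | mem y hy =>
        obtain ⟨⟨i, j⟩, rfl⟩ := hy
        have := (hx i j).trans (hΔ i j).symm
        have h2 : ⟪u i - u j, x⟫ = ⟪u i - u j, Δ⟫ := by linarith
        rw [inner_sub_right, h2, sub_self]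
      | zero => simp
      | add y z _ _ hy hz => rw [inner_add_left, hy, hz, add_zero]
      | smul a y _ hy => rw [inner_smul_left, hy]; simp
    have : x - Δ = 0 := by
      have := key (x - Δ)
      rwa [inner_self_eq_zero] at this
    exact sub_eq_zero.mp this
  · rintro rfl; exact hΔ
end
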